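/- Fix reals V, t, H, L with t > 0, 0 < L < H, H − L < 2t and V − t − H > 0, and set x̲ = 1 − (H−L)/(2t). For every feasible reduced mechanism (y, m, m₁) there exists a feasible reduced mechanism (y', m', m₁') with y'(x) ≥ 1/2 for all x ∈ [x̲,1] whose revenue is greater than or equal to the revenue of (y, m, m₁). -/

import Mathlib

open MeasureTheory Set intervalIntegral Function


lemma aux_int_le_const {a b M : ℝ} (hab : a ≤ b) {f : ℝ → ℝ}
    (hf : IntervalIntegrable f volume a b) (h : ∀ s ∈ Icc a b, f s ≤ M) :
    ∫ s in a..b, f s ≤ (b - a) * M := by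
  have := intervalIntegral.integral_mono_on (f := f) (g := fun _ => M) hab hf
    intervalIntegrable_const h
  simpa [smul_eq_mul] using this

lemma aux_const_le_int {a b M : ℝ} (hab : a ≤ b) {f : ℝ → ℝ}
    (hf : IntervalIntegrable f volume a b) (h : ∀ s ∈ Icc a b, M ≤ f s) :
    (b - a) * M ≤ ∫ s in a..b, f s := by
  have := intervalIntegral.integral_mono_on (f := fun _ => M) (g := f) hab
    intervalIntegrable_const hf h
  simpa [smul_eq_mul] using this

lemma aux_intervalIntegrable_of_bounded {a b C : ℝ} (hab : a ≤ b) {f : ℝ → ℝ}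
    (hf : Measurable f) (h : ∀ x ∈ Icc a b, |f x| ≤ C) :
    IntervalIntegrable f volume a b := by
  rw [intervalIntegrable_iff_integrableOn_Ioc_of_le hab]
  refine Integrable.mono' (g := fun _ => C) ?_ hf.aestronglyMeasurable.restrict ?_
  · exact integrableOn_const measure_Ioc_lt_top.ne
  · filter_upwards [ae_restrict_mem measurableSet_Ioc] with x hx
    exact h x ⟨le_of_lt hx.1, hx.2⟩
section Darboux

variable {p q : ℝ} {g u : ℝ → ℝ}

lemma darboux_partition (hpq : p ≤ q) (hg : MonotoneOn g (Icc p q)) (n : ℕ) :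
    (∀ x ∈ Icc p q, ∀ x' ∈ Icc p q, u x' + (x - x') * g x' ≤ u x) →
    (∫ s in p..q, g s ≤ (u q - u p) + ((q - p) / (n + 1)) * (g q - g p)) ∧
    (u q - u p ≤ (∫ s in p..q, g s) + ((q - p) / (n + 1)) * (g q - g p)) := by
  intro h
  have hn1 : (0:ℝ) < (n:ℝ) + 1 := by positivity
  set Δ : ℝ := (q - p) / (n + 1) with hΔdef
  have hΔ0 : 0 ≤ Δ := by
    apply div_nonneg (by linarith) (by linarith)
  set a : ℕ → ℝ := fun i => p + i * Δ with hadef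
  have ha0 : a 0 = p := by simp [hadef]
  have haN : a (n + 1) = q := by
    simp only [hadef, hΔdef]
    push_cast
    field_simp
    ring
  have hstep : ∀ i : ℕ, a (i + 1) - a i = Δ := by
    intro i; simp only [hadef]; push_cast; ring
  have hmono : ∀ i j : ℕ, i ≤ j → a i ≤ a j := by
    intro i j hij
    have hij' : (i : ℝ) ≤ j := by exact_mod_cast hij
    simp only [hadef]
    nlinarith
  have hmem : ∀ i : ℕ, i ≤ n + 1 → a i ∈ Icc p q := by
    intro i hi
    constructor
    · have := hmono 0 i (Nat.zero_le _); rwa [ha0] at this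
    · have := hmono i (n + 1) hi; rwa [haN] at this
  have hint : ∀ i : ℕ, i < n + 1 → IntervalIntegrable g volume (a i) (a (i + 1)) := by
    intro i hi
    apply MonotoneOn.intervalIntegrable
    apply hg.mono
    rw [uIcc_of_le (hmono i (i + 1) (by omega))]
    exact Icc_subset_Icc (hmem i (by omega)).1 (hmem (i + 1) (by omega)).2
  have hsplit := intervalIntegral.sum_integral_adjacent_intervals (μ := volume) (f := g) hint
  rw [ha0, haN] at hsplit
  -- pieces bounds
  have hub : ∀ i : ℕ, i < n + 1 →
      ∫ s in a i..a (i + 1), g s ≤ Δ * g (a (i + 1)) := by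
    intro i hi
    have := aux_int_le_const (hmono i (i + 1) (by omega)) (hint i hi) (fun s hs => by
      apply hg (Icc_subset_Icc (hmem i (by omega)).1 (hmem (i + 1) (by omega)).2 hs)
        (hmem (i + 1) (by omega)) hs.2)
    rwa [hstep i] at this
  have hlb : ∀ i : ℕ, i < n + 1 →
      Δ * g (a i) ≤ ∫ s in a i..a (i + 1), g s := by
    intro i hi
    have := aux_const_le_int (hmono i (i + 1) (by omega)) (hint i hi) (fun s hs => by
      apply hg (hmem i (by omega))
        (Icc_subset_Icc (hmem i (by omega)).1 (hmem (i + 1) (by omega)).2 hs) hs.1)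
    rwa [hstep i] at this
  have huub : ∀ i : ℕ, i < n + 1 →
      u (a (i + 1)) - u (a i) ≤ Δ * g (a (i + 1)) := by
    intro i hi
    have := h (a i) (hmem i (by omega)) (a (i + 1)) (hmem (i + 1) (by omega))
    have h2 : a i - a (i + 1) = -Δ := by rw [← hstep i]; ring
    rw [h2] at this
    linarith
  have hulb : ∀ i : ℕ, i < n + 1 →
      Δ * g (a i) ≤ u (a (i + 1)) - u (a i) := by
    intro i hi
    have := h (a (i + 1)) (hmem (i + 1) (by omega)) (a i) (hmem i (by omega))
    rw [hstep i] at this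
    linarith
  -- telescoping sums
  have hTu : ∑ i ∈ Finset.range (n + 1), (u (a (i + 1)) - u (a i)) = u q - u p := by
    rw [Finset.sum_range_sub (fun i => u (a i))]
    rw [ha0, haN]
  have hTg : ∑ i ∈ Finset.range (n + 1), (g (a (i + 1)) - g (a i)) = g q - g p := by
    rw [Finset.sum_range_sub (fun i => g (a i))]
    rw [ha0, haN]
  constructor
  · -- integral ≤ u-diff + error
    have key : ∀ i ∈ Finset.range (n + 1),
        ∫ s in a i..a (i + 1), g s ≤
          (u (a (i + 1)) - u (a i)) + Δ * (g (a (i + 1)) - g (a i)) := by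
      intro i hi
      simp only [Finset.mem_range] at hi
      have h1 := hub i hi
      have h2 := hulb i hi
      nlinarith [hΔ0]
    have := Finset.sum_le_sum key
    rw [hsplit] at this
    calc ∫ s in p..q, g s ≤ _ := this
      _ = (u q - u p) + Δ * (g q - g p) := by
          rw [Finset.sum_add_distrib, hTu, ← Finset.mul_sum, hTg]
  · have key : ∀ i ∈ Finset.range (n + 1),
        u (a (i + 1)) - u (a i) ≤
          (∫ s in a i..a (i + 1), g s) + Δ * (g (a (i + 1)) - g (a i)) := by
      intro i hi
      simp only [Finset.mem_range] at hi
      have h1 := hlb i hi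
      have h2 := huub i hi
      nlinarith [hΔ0]
    have := Finset.sum_le_sum key
    rw [hTu, Finset.sum_add_distrib, hsplit, ← Finset.mul_sum, hTg] at this
    exact this

lemma darboux_le (hpq : p ≤ q) (hg : MonotoneOn g (Icc p q))
    (h : ∀ x ∈ Icc p q, ∀ x' ∈ Icc p q, u x' + (x - x') * g x' ≤ u x) :
    ∫ s in p..q, g s ≤ u q - u p := by
  refine le_of_forall_pos_le_add fun ε hε => ?_
  have hgqp : 0 ≤ g q - g p := by
    have := hg (left_mem_Icc.2 hpq) (right_mem_Icc.2 hpq) hpq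
    linarith
  obtain ⟨n, hn⟩ := exists_nat_gt ((q - p) * (g q - g p) / ε)
  have h1 := (darboux_partition hpq hg n h).1
  have h2 : ((q - p) / (n + 1)) * (g q - g p) ≤ ε := by
    rw [div_mul_eq_mul_div, div_le_iff₀ (by positivity)]
    rw [div_lt_iff₀ hε] at hn
    nlinarith [hε.le]
  linarith

lemma darboux_ge (hpq : p ≤ q) (hg : MonotoneOn g (Icc p q))
    (h : ∀ x ∈ Icc p q, ∀ x' ∈ Icc p q, u x' + (x - x') * g x' ≤ u x) :
    u q - u p ≤ ∫ s in p..q, g s := by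
  refine le_of_forall_pos_le_add fun ε hε => ?_
  have hgqp : 0 ≤ g q - g p := by
    have := hg (left_mem_Icc.2 hpq) (right_mem_Icc.2 hpq) hpq
    linarith
  obtain ⟨n, hn⟩ := exists_nat_gt ((q - p) * (g q - g p) / ε)
  have h1 := (darboux_partition hpq hg n h).2
  have h2 : ((q - p) / (n + 1)) * (g q - g p) ≤ ε := by
    rw [div_mul_eq_mul_div, div_le_iff₀ (by positivity)]
    rw [div_lt_iff₀ hε] at hn
    nlinarith [hε.le]
  linarith

end Darboux

lemma fubini_aux {c : ℝ} (hc : c ≤ 1) {h : ℝ → ℝ} (hm : Measurable h)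
    {B : ℝ} (hb : ∀ x, |h x| ≤ B) :
    ∫ x in c..1, (∫ s in x..1, h s) = ∫ s in c..1, (s - c) * h s := by
  haveI hfin : IsFiniteMeasure (volume.restrict (Ioc c (1:ℝ))) :=
    ⟨by rw [Measure.restrict_apply_univ]; exact measure_Ioc_lt_top⟩
  set F : ℝ → ℝ → ℝ := fun x s => if x < s then h s else 0 with hFdef
  have hB0 : 0 ≤ B := le_trans (abs_nonneg _) (hb 0)
  have hFmeas : Measurable (uncurry F) := by
    apply Measurable.ite (measurableSet_lt measurable_fst measurable_snd)
      (hm.comp measurable_snd) measurable_const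
  have hFint : Integrable (uncurry F)
      ((volume.restrict (Ioc c 1)).prod (volume.restrict (Ioc c 1))) := by
    refine Integrable.mono' (g := fun _ => B) (integrable_const _)
      hFmeas.aestronglyMeasurable ?_
    filter_upwards with p
    simp only [uncurry, hFdef]
    split
    · exact hb _
    · simpa using hB0
  have h1 : ∀ x ∈ Ioc c (1:ℝ), (∫ s in x..1, h s) = ∫ s in Ioc c 1, F x s := by
    intro x hx
    rw [intervalIntegral.integral_of_le hx.2]
    have hind : ∀ s, F x s = (Ioi x).indicator h s := by
      intro s; simp [hFdef, Set.indicator, mem_Ioi]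
    rw [show (fun s => F x s) = (Ioi x).indicator h from funext hind]
    rw [MeasureTheory.setIntegral_indicator measurableSet_Ioi]
    have hset : Ioc c (1:ℝ) ∩ Ioi x = Ioc x 1 := by
      ext s
      simp only [mem_inter_iff, mem_Ioc, mem_Ioi]
      constructor
      · rintro ⟨⟨_, hs1⟩, hxs⟩; exact ⟨hxs, hs1⟩
      · rintro ⟨hxs, hs1⟩; exact ⟨⟨lt_of_le_of_lt hx.1.le hxs, hs1⟩, hxs⟩
    rw [hset]
  have h2 : ∀ s ∈ Ioc c (1:ℝ), (∫ x in Ioc c 1, F x s) = (s - c) * h s := by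
    intro s hs
    have hind : (fun x => F x s) = (Iio s).indicator (fun _ => h s) := by
      funext x; simp [hFdef, Set.indicator, mem_Iio]
    rw [hind, MeasureTheory.setIntegral_indicator measurableSet_Iio]
    rw [MeasureTheory.setIntegral_const]
    have hset : Ioc c (1:ℝ) ∩ Iio s = Ioo c s := by
      ext x
      simp only [mem_inter_iff, mem_Ioc, mem_Iio, mem_Ioo]
      constructor
      · rintro ⟨⟨h1, _⟩, h2⟩; exact ⟨h1, h2⟩
      · rintro ⟨h1, h2⟩; exact ⟨⟨h1, le_trans h2.le hs.2⟩, h2⟩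
    rw [hset, measureReal_def, Real.volume_Ioo, smul_eq_mul, ENNReal.toReal_ofReal (by linarith [hs.1])]
  rw [intervalIntegral.integral_of_le hc, intervalIntegral.integral_of_le hc]
  rw [MeasureTheory.setIntegral_congr_fun measurableSet_Ioc h1]
  rw [MeasureTheory.integral_integral_swap hFint]
  exact MeasureTheory.setIntegral_congr_fun measurableSet_Ioc h2

/-- Boundary of the first segment: `x̲ = 1 - (H-L)/(2t)`. -/
noncomputable def xlow (t H L : ℝ) : ℝ := 1 - (H - L) / (2 * t)

/-- Second-segment consumer utility `U(y', x)`. -/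
noncomputable def secU (V t L y x : ℝ) : ℝ :=
  y * (V - x * t - L) + (1 - y) * ((V - t) - (1 - x) * t - L)

/-- Utility of the first-segment consumer located at `x̲` under allocation `y'`. -/
noncomputable def firstW (V t H L y : ℝ) : ℝ :=
  y * (V - xlow t H L * t - L) + (1 - y) * (V - xlow t H L * t - H)

/-- Feasibility of a reduced mechanism `(y, m, m₁)`. -/
def Feasible (V t H L : ℝ) (y m : ℝ → ℝ) (m₁ : ℝ) : Prop :=
  Measurable y ∧
  (∀ x ∈ Icc (xlow t H L) 1, y x ∈ Icc (0 : ℝ) 1) ∧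
  Measurable m ∧
  IntervalIntegrable m volume (xlow t H L) 1 ∧
  -- (IC2)
  (∀ x ∈ Icc (xlow t H L) 1, ∀ x' ∈ Icc (xlow t H L) 1,
    secU V t L (y x) x - m x ≥ secU V t L (y x') x - m x') ∧
  -- (IC1a)
  (∀ x' ∈ Icc (xlow t H L) 1,
    (V - xlow t H L * t - H) - m₁ ≥ firstW V t H L (y x') - m x') ∧
  -- (IC1b)
  (∀ x ∈ Icc (xlow t H L) 1,
    secU V t L (y x) x - m x ≥ (V - x * t - H) - m₁) ∧
  -- (IR)
  (∀ x ∈ Icc (xlow t H L) 1, secU V t L (y x) x - m x ≥ 0) ∧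
  ((V - xlow t H L * t - H) - m₁ ≥ 0) ∧
  -- (OB)
  xlow t H L * H ≥ (xlow t H L + ∫ x in (xlow t H L)..1, (1 - y x)) * L

/-- Broker revenue of a reduced mechanism. -/
noncomputable def Revenue (t H L : ℝ) (m : ℝ → ℝ) (m₁ : ℝ) : ℝ :=
  xlow t H L * m₁ + ∫ x in (xlow t H L)..1, m x

set_option maxHeartbeats 4000000 in
/-- Every feasible reduced mechanism is weakly revenue-dominated by a feasible
reduced mechanism whose allocation satisfies `y'(x) ≥ 1/2` on `[x̲,1]`. -/
theorem statement8 (V t H L : ℝ) (ht : 0 < t) (hL0 : 0 < L) (hLH : L < H)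
    (hHL : H - L < 2 * t) (hV : 0 < V - t - H)
    (y m : ℝ → ℝ) (m₁ : ℝ) (hfeas : Feasible V t H L y m m₁) :
    ∃ y' : ℝ → ℝ, ∃ m' : ℝ → ℝ, ∃ m₁' : ℝ,
      Feasible V t H L y' m' m₁' ∧
      (∀ x ∈ Icc (xlow t H L) 1, (1 : ℝ) / 2 ≤ y' x) ∧
      Revenue t H L m m₁ ≤ Revenue t H L m' m₁' := by
  obtain ⟨hymeas, hy01, hmmeas, hmint, hIC2, hIC1a, hIC1b, hIR2, hIR1, hOB⟩ := hfeas
  -- algebraic identities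
  have hsecU_diff : ∀ y0 x x' : ℝ,
      secU V t L y0 x = secU V t L y0 x' + (x - x') * (t * (1 - 2 * y0)) := by
    intros; simp only [secU]; ring
  have hsecU_y : ∀ y0 y1 x : ℝ,
      secU V t L y0 x - secU V t L y1 x = (y0 - y1) * (2 * t * (1 - x)) := by
    intros; simp only [secU]; ring
  have hfirstW : ∀ y0 x' : ℝ,
      firstW V t H L y0 = secU V t L y0 x' + (x' - xlow t H L) * (t * (2 * y0 - 1)) := by
    intro y0 x'
    simp only [firstW, secU, xlow]
    field_simp
    ring
  obtain ⟨c, hcdef⟩ : ∃ z : ℝ, z = xlow t H L := ⟨_, rfl⟩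
  rw [← hcdef] at hy01 hmint hIC2 hIC1a hIC1b hIR2 hIR1 hOB hfirstW ⊢
  have hc1 : c < 1 := by
    rw [hcdef]; unfold xlow
    have : 0 < (H - L) / (2 * t) := by
      apply div_pos (by linarith) (by linarith)
    linarith
  have hc0 : 0 < c := by
    rw [hcdef]; unfold xlow
    have : (H - L) / (2 * t) < 1 := by
      rw [div_lt_one (by linarith)]; exact hHL
    linarith
  have hcmem : c ∈ Icc c 1 := ⟨le_refl c, hc1.le⟩
  have h1mem : (1:ℝ) ∈ Icc c 1 := ⟨hc1.le, le_refl 1⟩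
  obtain ⟨u, hudef⟩ : ∃ f : ℝ → ℝ, f = fun x => secU V t L (y x) x - m x := ⟨_, rfl⟩
  obtain ⟨g, hgdef⟩ : ∃ f : ℝ → ℝ, f = fun x => t * (1 - 2 * y x) := ⟨_, rfl⟩
  obtain ⟨Ptr, hPdef⟩ : ∃ f : ℝ → ℝ,
    f = (Icc c 1).indicator (fun x => max (t * (1 - 2 * y x)) 0) := ⟨_, rfl⟩
  obtain ⟨Ntr, hNdef⟩ : ∃ f : ℝ → ℝ,
    f = (Icc c 1).indicator (fun x => max (t * (2 * y x - 1)) 0) := ⟨_, rfl⟩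
  obtain ⟨y', hy'def⟩ : ∃ f : ℝ → ℝ, f = fun x => max (y x) (1 / 2) := ⟨_, rfl⟩
  obtain ⟨u', hu'def⟩ : ∃ f : ℝ → ℝ, f = fun x => ∫ s in x..1, Ntr s := ⟨_, rfl⟩
  obtain ⟨m', hm'def⟩ : ∃ f : ℝ → ℝ, f = fun x => secU V t L (y' x) x - u' x := ⟨_, rfl⟩
  obtain ⟨m₁', hm₁'def⟩ : ∃ z : ℝ, z = (V - c * t - H) - u' c := ⟨_, rfl⟩
  -- basic pointwise facts
  have hF1 : ∀ x ∈ Icc c 1, ∀ x' ∈ Icc c 1, u x' + (x - x') * g x' ≤ u x := by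
    intro x hx x' hx'
    have h2 := hIC2 x hx x' hx'
    have h3 := hsecU_diff (y x') x x'
    simp only [hudef, hgdef]
    linarith
  have hgmono : MonotoneOn g (Icc c 1) := by
    intro a ha b hb hab
    rcases eq_or_lt_of_le hab with rfl | hlt
    · exact le_refl _
    · have h1 := hF1 b hb a ha
      have h2 := hF1 a ha b hb
      nlinarith
  have hyanti : ∀ a ∈ Icc c 1, ∀ b ∈ Icc c 1, a ≤ b → y b ≤ y a := by
    intro a ha b hb hab
    have := hgmono ha hb hab
    simp only [hgdef] at this
    nlinarith
  have hu0 : ∀ x ∈ Icc c 1, 0 ≤ u x := by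
    intro x hx
    rw [hudef]
    exact hIR2 x hx
  have hu₁ : u c ≤ (V - c * t - H) - m₁ := by
    have h1 := hIC1a c hcmem
    have h2 := hfirstW (y c) c
    have h3 : (c - c) * (t * (2 * y c - 1)) = 0 := by ring
    simp only [hudef]
    linarith
  -- measurability and integrability
  have hymeas' : Measurable y' := by
    rw [hy'def]
    exact hymeas.max measurable_const
  have hgNmeas : Measurable (fun x => max (t * (2 * y x - 1)) 0) := by
    apply Measurable.max _ measurable_const
    exact (((hymeas.const_mul 2).sub measurable_const).const_mul t)
  have hgPmeas : Measurable (fun x => max (t * (1 - 2 * y x)) 0) := by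
    apply Measurable.max _ measurable_const
    exact ((measurable_const.sub (hymeas.const_mul 2)).const_mul t)
  have hNmeas : Measurable Ntr := by
    rw [hNdef]; exact hgNmeas.indicator measurableSet_Icc
  have hPmeas : Measurable Ptr := by
    rw [hPdef]; exact hgPmeas.indicator measurableSet_Icc
  have hN0 : ∀ x, 0 ≤ Ntr x := by
    intro x
    simp only [hNdef, indicator]
    split
    · exact le_max_right _ _
    · exact le_refl _
  have hP0 : ∀ x, 0 ≤ Ptr x := by
    intro x
    simp only [hPdef, indicator]
    split
    · exact le_max_right _ _
    · exact le_refl _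
  have hNt : ∀ x, Ntr x ≤ t := by
    intro x
    simp only [hNdef, indicator]
    split
    case isTrue hx =>
      have h1 := (hy01 x hx).2
      exact max_le (by nlinarith) ht.le
    case isFalse => exact ht.le
  have hPt : ∀ x, Ptr x ≤ t := by
    intro x
    simp only [hPdef, indicator]
    split
    case isTrue hx =>
      have h1 := (hy01 x hx).1
      exact max_le (by nlinarith) ht.le
    case isFalse => exact ht.le
  have hNabs : ∀ x, |Ntr x| ≤ t := fun x => abs_le.2 ⟨by linarith [hN0 x], hNt x⟩
  have hPabs : ∀ x, |Ptr x| ≤ t := fun x => abs_le.2 ⟨by linarith [hP0 x], hPt x⟩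
  have hNint : Integrable Ntr volume := by
    rw [hNdef, integrable_indicator_iff measurableSet_Icc]
    refine Integrable.mono' (g := fun _ => t)
      (integrableOn_const measure_Icc_lt_top.ne) hgNmeas.aestronglyMeasurable.restrict ?_
    filter_upwards [ae_restrict_mem measurableSet_Icc] with x hx
    rw [Real.norm_eq_abs]
    have h1 := (hy01 x hx).2
    rw [abs_le]
    constructor
    · have : (0:ℝ) ≤ max (t * (2 * y x - 1)) 0 := le_max_right _ _
      linarith
    · exact max_le (by nlinarith) ht.le
  have hPint : Integrable Ptr volume := by
    rw [hPdef, integrable_indicator_iff measurableSet_Icc]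
    refine Integrable.mono' (g := fun _ => t)
      (integrableOn_const measure_Icc_lt_top.ne) hgPmeas.aestronglyMeasurable.restrict ?_
    filter_upwards [ae_restrict_mem measurableSet_Icc] with x hx
    rw [Real.norm_eq_abs]
    have h1 := (hy01 x hx).1
    rw [abs_le]
    constructor
    · have : (0:ℝ) ≤ max (t * (1 - 2 * y x)) 0 := le_max_right _ _
      linarith
    · exact max_le (by nlinarith) ht.le
  have hNanti : AntitoneOn Ntr (Icc c 1) := by
    intro a ha b hb hab
    simp only [hNdef, indicator_of_mem ha, indicator_of_mem hb]
    have := hyanti a ha b hb hab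
    exact max_le_max (by nlinarith) le_rfl
  have hu'cont : Continuous u' := by
    have he : u' = fun x => -(∫ s in (1:ℝ)..x, Ntr s) := by
      funext x
      simp only [hu'def]
      rw [intervalIntegral.integral_symm]
    rw [he]
    exact (hNint.continuous_primitive 1).neg
  have hu'diff : ∀ x x' : ℝ, u' x' = (∫ s in x'..x, Ntr s) + u' x := by
    intro x x'
    simp only [hu'def]
    rw [intervalIntegral.integral_add_adjacent_intervals (hNint.intervalIntegrable)
      (hNint.intervalIntegrable)]
  have hu'key : ∀ x ∈ Icc c 1, ∀ x' ∈ Icc c 1, u' x' + (x - x') * (-(Ntr x')) ≤ u' x := by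
    intro x hx x' hx'
    have hd := hu'diff x x'
    rcases le_total x' x with hle | hle
    · have hb := aux_int_le_const hle (hNint.intervalIntegrable) (fun s hs => by
        exact hNanti hx' ⟨le_trans hx'.1 hs.1, le_trans hs.2 hx.2⟩ hs.1)
      linarith
    · have hb := aux_const_le_int hle (hNint.intervalIntegrable) (fun s hs => by
        exact hNanti ⟨le_trans hx.1 hs.1, le_trans hs.2 hx'.2⟩ hx' hs.2)
      rw [intervalIntegral.integral_symm x x'] at hd
      linarith
  have hy'N : ∀ z ∈ Icc c 1, t * (1 - 2 * y' z) = -(Ntr z) := by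
    intro z hz
    simp only [hy'def, hNdef, indicator_of_mem hz]
    rcases le_total (y z) (1/2) with h | h
    · rw [max_eq_right h, max_eq_right (by nlinarith)]
      ring
    · rw [max_eq_left h, max_eq_left (by nlinarith)]
      ring
  -- integrability of secU-type functions on [c,1]
  have hsecUbound : ∀ (w : ℝ → ℝ), (∀ x ∈ Icc c 1, w x ∈ Icc (0:ℝ) 1) →
      ∀ x ∈ Icc c 1, |secU V t L (w x) x| ≤ |V - L - 2*t| + 3*t := by
    intro w hw x hx
    have he : secU V t L (w x) x = (V - L - 2*t) + x*t + 2*t*(1-x)*(w x) := by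
      simp only [secU]; ring
    have h1 := (hw x hx).1
    have h2 := (hw x hx).2
    have h3 : 0 ≤ x*t := mul_nonneg (by linarith [hx.1]) ht.le
    have h4 : x*t ≤ t := by nlinarith [hx.2]
    have h5 : 0 ≤ 2*t*(1-x)*(w x) := by
      apply mul_nonneg (mul_nonneg (by linarith) (by linarith [hx.2])) h1
    have h6 : 2*t*(1-x)*(w x) ≤ 2*t := by nlinarith [hx.1, hx.2]
    rw [abs_le]
    constructor
    · have := neg_abs_le (V - L - 2*t)
      linarith
    · have := le_abs_self (V - L - 2*t)
      linarith
  have hsecUmeas : ∀ (w : ℝ → ℝ), Measurable w → Measurable (fun x => secU V t L (w x) x) := by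
    intro w hw
    simp only [secU]
    apply Measurable.add
    · exact hw.mul ((measurable_const.sub (measurable_id.mul measurable_const)).sub measurable_const)
    · exact (measurable_const.sub hw).mul
        ((measurable_const.sub ((measurable_const.sub measurable_id).mul measurable_const)).sub
          measurable_const)
  have hy'01 : ∀ x ∈ Icc c 1, y' x ∈ Icc (0:ℝ) 1 := by
    intro x hx
    rw [hy'def]
    constructor
    · exact le_trans (by norm_num) (le_max_right _ _)
    · exact max_le (hy01 x hx).2 (by norm_num)
  have hsecUy'int : IntervalIntegrable (fun x => secU V t L (y' x) x) volume c 1 :=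
    aux_intervalIntegrable_of_bounded hc1.le (hsecUmeas y' hymeas') (hsecUbound y' hy'01)
  have hsecUyint : IntervalIntegrable (fun x => secU V t L (y x) x) volume c 1 :=
    aux_intervalIntegrable_of_bounded hc1.le (hsecUmeas y hymeas) (hsecUbound y hy01)
  have hm'int : IntervalIntegrable m' volume c 1 := by
    simp only [hm'def]
    exact hsecUy'int.sub (hu'cont.intervalIntegrable c 1)
  have huint : IntervalIntegrable u volume c 1 := by
    simp only [hudef]
    exact hsecUyint.sub hmint
  -- key darboux facts
  have hgint : ∀ x ∈ Icc c 1, IntervalIntegrable g volume x 1 := by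
    intro x hx
    apply MonotoneOn.intervalIntegrable
    apply hgmono.mono
    rw [uIcc_of_le hx.2]
    exact Icc_subset_Icc hx.1 le_rfl
  have hdarb : ∀ x ∈ Icc c 1, u 1 - u x ≤ ∫ s in x..1, g s := by
    intro x hx
    apply darboux_ge hx.2 (hgmono.mono (Icc_subset_Icc hx.1 le_rfl))
    intro a ha b hb
    exact hF1 a ⟨le_trans hx.1 ha.1, ha.2⟩ b ⟨le_trans hx.1 hb.1, hb.2⟩
  have hGN : ∀ x ∈ Icc c 1, (∫ s in x..1, g s) + (∫ s in x..1, Ntr s) = ∫ s in x..1, Ptr s := by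
    intro x hx
    rw [← intervalIntegral.integral_add (hgint x hx) (hNint.intervalIntegrable)]
    apply intervalIntegral.integral_congr
    intro s hs
    rw [uIcc_of_le hx.2] at hs
    have hs' : s ∈ Icc c 1 := ⟨le_trans hx.1 hs.1, hs.2⟩
    simp only [hgdef, hNdef, hPdef, indicator_of_mem hs']
    have he : t * (2 * y s - 1) = -(t * (1 - 2 * y s)) := by ring
    rw [he]
    rcases le_total (t * (1 - 2 * y s)) 0 with h | h
    · rw [max_eq_right h, max_eq_left (by linarith)]
      ring
    · rw [max_eq_left h, max_eq_right (by linarith)]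
      ring
  have hqlow : ∀ x ∈ Icc c 1, u 1 - (∫ s in x..1, Ptr s) ≤ u x - u' x := by
    intro x hx
    have h1 := hdarb x hx
    have h2 := hGN x hx
    have h3 : u' x = ∫ s in x..1, Ntr s := by simp only [hu'def]
    linarith
  -- the feasibility of the new mechanism
  simp only [Feasible, ← hcdef]
  refine ⟨y', m', m₁', ⟨hymeas', hy'01, ?_, hm'int, ?_, ?_, ?_, ?_, ?_, ?_⟩, ?_, ?_⟩
  · -- Measurable m'
    simp only [hm'def]
    exact (hsecUmeas y' hymeas').sub hu'cont.measurable
  · -- IC2'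
    intro x hx x' hx'
    have h3 := hsecU_diff (y' x') x x'
    have h4 := hy'N x' hx'
    have h5 := hu'key x hx x' hx'
    simp only [hm'def]
    rw [h4] at h3
    linarith
  · -- IC1a'
    intro x' hx'
    have h2 := hfirstW (y' x') x'
    have h4 : t * (2 * y' x' - 1) = Ntr x' := by
      have := hy'N x' hx'
      linarith
    have h5 := hu'key c hcmem x' hx'
    simp only [hm'def, hm₁'def]
    rw [h4] at h2
    have h6 : (c - x') * (-(Ntr x')) = (x' - c) * Ntr x' := by ring
    rw [h6] at h5
    linarith
  · -- IC1b'
    intro x hx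
    have hd := hu'diff x c
    have hb := aux_int_le_const hx.1 (hNint.intervalIntegrable) (fun s _ => hNt s)
    simp only [hm'def, hm₁'def]
    linarith
  · -- IR second segment
    intro x hx
    have hb := aux_const_le_int hx.2 (hNint.intervalIntegrable) (fun s _ => hN0 s)
    have h3 : u' x = ∫ s in x..1, Ntr s := by simp only [hu'def]
    simp only [hm'def]
    linarith
  · -- IR first segment
    have hb := aux_const_le_int hc1.le (hNint.intervalIntegrable) (fun s _ => hN0 s)
    have h3 : u' c = ∫ s in c..1, Ntr s := by simp only [hu'def]
    simp only [hm₁'def]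
    linarith
  · -- OB
    have hyint2 : IntervalIntegrable (fun x => 1 - y x) volume c 1 := by
      apply aux_intervalIntegrable_of_bounded hc1.le (measurable_const.sub hymeas) (C := 1)
      intro x hx
      have := hy01 x hx
      simp only [Pi.sub_apply]
      rw [abs_le]
      exact ⟨by linarith [this.2], by linarith [this.1]⟩
    have hy'int2 : IntervalIntegrable (fun x => 1 - y' x) volume c 1 := by
      apply aux_intervalIntegrable_of_bounded hc1.le (measurable_const.sub hymeas') (C := 1)
      intro x hx
      have := hy'01 x hx
      simp only [Pi.sub_apply]
      rw [abs_le]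
      exact ⟨by linarith [this.2], by linarith [this.1]⟩
    have hmono2 : (∫ x in c..1, (1 - y' x)) ≤ ∫ x in c..1, (1 - y x) := by
      apply intervalIntegral.integral_mono_on hc1.le hy'int2 hyint2
      intro x _
      simp only [hy'def]
      have := le_max_left (y x) (1/2)
      linarith
    have hmul := mul_le_mul_of_nonneg_right hmono2 hL0.le
    linarith [hmul, hOB]
  · -- y' ≥ 1/2
    intro x _
    simp only [hy'def]
    exact le_max_right _ _
  · -- Revenue comparison
    simp only [Revenue, ← hcdef]
    -- names for the integrals
    have hIIP : IntervalIntegrable Ptr volume c 1 := hPint.intervalIntegrable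
    have hII1 : IntervalIntegrable (fun x => (1 - x) * Ptr x) volume c 1 := by
      apply aux_intervalIntegrable_of_bounded hc1.le
        ((measurable_const.sub measurable_id).mul hPmeas) (C := 2 * t)
      intro x hx
      show |(1 - x) * Ptr x| ≤ 2 * t
      rw [abs_mul]
      have h1 : |1 - x| ≤ 2 := by rw [abs_le]; constructor <;> linarith [hx.1, hx.2, hc0]
      calc |1 - x| * |Ptr x| ≤ 2 * |Ptr x| :=
            mul_le_mul_of_nonneg_right h1 (abs_nonneg _)
        _ ≤ 2 * t := by linarith [hPabs x]
    have hII2 : IntervalIntegrable (fun x => (x - c) * Ptr x) volume c 1 := by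
      apply aux_intervalIntegrable_of_bounded hc1.le
        ((measurable_id.sub measurable_const).mul hPmeas) (C := 2 * t)
      intro x hx
      show |(x - c) * Ptr x| ≤ 2 * t
      rw [abs_mul]
      have h1 : |x - c| ≤ 2 := by rw [abs_le]; constructor <;> linarith [hx.1, hx.2, hc0]
      calc |x - c| * |Ptr x| ≤ 2 * |Ptr x| :=
            mul_le_mul_of_nonneg_right h1 (abs_nonneg _)
        _ ≤ 2 * t := by linarith [hPabs x]
    have hII3 : IntervalIntegrable (fun x => (1 - 2*x) * Ptr x) volume c 1 := by
      apply aux_intervalIntegrable_of_bounded hc1.le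
        ((measurable_const.sub (measurable_id.const_mul 2)).mul hPmeas) (C := 2 * t)
      intro x hx
      show |(1 - 2*x) * Ptr x| ≤ 2 * t
      rw [abs_mul]
      have h1 : |1 - 2*x| ≤ 2 := by rw [abs_le]; constructor <;> linarith [hx.1, hx.2, hc0]
      calc |1 - 2*x| * |Ptr x| ≤ 2 * |Ptr x| :=
            mul_le_mul_of_nonneg_right h1 (abs_nonneg _)
        _ ≤ 2 * t := by linarith [hPabs x]
    have hIIneg : IntervalIntegrable (fun x => -Ptr x) volume c 1 := hIIP.neg
    have hPprimcont : Continuous (fun x => ∫ s in x..1, Ptr s) := by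
      have he : (fun x => ∫ s in x..1, Ptr s) = fun x => -(∫ s in (1:ℝ)..x, Ptr s) := by
        funext x
        rw [intervalIntegral.integral_symm]
      rw [he]
      exact (hPint.continuous_primitive 1).neg
    have hfub : (∫ x in c..1, (∫ s in x..1, Ptr s)) = ∫ s in c..1, (s - c) * Ptr s :=
      fubini_aux hc1.le hPmeas hPabs
    -- revenue difference on the second segment
    have hcong : (∫ x in c..1, m' x) - (∫ x in c..1, m x)
        = ∫ x in c..1, ((1 - x) * Ptr x + (u x - u' x)) := by
      rw [← intervalIntegral.integral_sub hm'int hmint]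
      apply intervalIntegral.integral_congr
      intro x hx
      rw [uIcc_of_le hc1.le] at hx
      have h1 := hsecU_y (y' x) (y x) x
      have h2 : (y' x - y x) * (2*t*(1-x)) = (1-x) * Ptr x := by
        simp only [hy'def, hPdef, indicator_of_mem hx]
        rcases le_total (y x) (1/2) with h | h
        · rw [max_eq_right h, max_eq_left (by nlinarith)]
          ring
        · rw [max_eq_left h, max_eq_right (by nlinarith)]
          ring
      simp only [hm'def, hudef]
      linarith
    have hlowint : IntervalIntegrable (fun x => (1 - x) * Ptr x + (u 1 - (∫ s in x..1, Ptr s)))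
        volume c 1 :=
      hII1.add ((continuous_const.sub hPprimcont).intervalIntegrable c 1)
    have hupint : IntervalIntegrable (fun x => (1 - x) * Ptr x + (u x - u' x)) volume c 1 :=
      hII1.add (huint.sub (hu'cont.intervalIntegrable c 1))
    have hintineq : (∫ x in c..1, ((1 - x) * Ptr x + (u 1 - (∫ s in x..1, Ptr s))))
        ≤ ∫ x in c..1, ((1 - x) * Ptr x + (u x - u' x)) := by
      apply intervalIntegral.integral_mono_on hc1.le hlowint hupint
      intro x hx
      have := hqlow x hx
      linarith
    have hsplit2 : (∫ x in c..1, ((1 - x) * Ptr x + (u 1 - (∫ s in x..1, Ptr s))))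
        = (∫ x in c..1, (1 - x) * Ptr x)
          + ((1 - c) * u 1 - ∫ x in c..1, (x - c) * Ptr x) := by
      rw [intervalIntegral.integral_add hII1
        (show IntervalIntegrable (fun x => u 1 - ∫ s in x..1, Ptr s) volume c 1 from
          (continuous_const.sub hPprimcont).intervalIntegrable c 1)]
      rw [intervalIntegral.integral_sub (intervalIntegrable_const)
        (hPprimcont.intervalIntegrable c 1)]
      rw [intervalIntegral.integral_const, hfub]
      simp [smul_eq_mul]
    -- first segment
    have hm₁diff : c * (u 1 - ∫ x in c..1, Ptr x) ≤ c * m₁' - c * m₁ := by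
      have h2 := hdarb c hcmem
      have h3 := hGN c hcmem
      have h4 : u' c = ∫ s in c..1, Ntr s := by simp only [hu'def]
      have h5 : u 1 - (∫ x in c..1, Ptr x) ≤ m₁' - m₁ := by
        simp only [hm₁'def]
        linarith
      nlinarith [hc0.le]
    -- linear combination identity
    have hK3 : (∫ x in c..1, (1 - 2*x) * Ptr x)
        = (∫ x in c..1, (1 - x) * Ptr x) - (∫ x in c..1, (x - c) * Ptr x)
          - c * (∫ x in c..1, Ptr x) := by
      have he : (fun x => (1 - 2*x) * Ptr x)
          = fun x => ((1 - x) * Ptr x - (x - c) * Ptr x - c * Ptr x) := by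
        funext x; ring
      rw [he]
      rw [intervalIntegral.integral_sub (hII1.sub hII2) (hIIP.const_mul c)]
      rw [intervalIntegral.integral_sub hII1 hII2]
      rw [intervalIntegral.integral_const_mul]
    have hK3ge : -(∫ x in c..1, Ptr x) ≤ ∫ x in c..1, (1 - 2*x) * Ptr x := by
      rw [← intervalIntegral.integral_neg]
      apply intervalIntegral.integral_mono_on hc1.le hIIneg hII3
      intro x hx
      nlinarith [hP0 x, hx.2]
    -- crossing point argument : ∫ Ptr ≤ u 1
    have hKle : (∫ x in c..1, Ptr x) ≤ u 1 := by
      by_cases hA : ∃ z, z ∈ Icc c 1 ∧ g z < 0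
      · obtain ⟨z0, hz0, hz0neg⟩ := hA
        set A : Set ℝ := {z | z ∈ Icc c 1 ∧ g z < 0} with hAdef
        have hAne : A.Nonempty := ⟨z0, hz0, hz0neg⟩
        have hAbdd : BddAbove A := ⟨1, fun z hz => hz.1.2⟩
        set a := sSup A with hadef2
        have haA : ∀ z ∈ A, z ≤ a := fun z hz => le_csSup hAbdd hz
        have hac : c ≤ a := le_trans hz0.1 (haA z0 ⟨hz0, hz0neg⟩)
        have ha1 : a ≤ 1 := csSup_le hAne (fun z hz => hz.1.2)
        have hamem : a ∈ Icc c 1 := ⟨hac, ha1⟩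
        have hsplitP : (∫ x in c..a, Ptr x) + (∫ x in a..1, Ptr x) = ∫ x in c..1, Ptr x :=
          intervalIntegral.integral_add_adjacent_intervals (hPint.intervalIntegrable)
            (hPint.intervalIntegrable)
        have hzero : (∫ x in c..a, Ptr x) = 0 := by
          rw [intervalIntegral.integral_of_le hac]
          have hae : ∀ᵐ (x : ℝ), x ∈ Ioc c a → Ptr x = 0 := by
            have hsing : ∀ᵐ (x : ℝ), x ≠ a := by
              have hone : {x : ℝ | ¬ x ≠ a} = {a} := by ext z; simp
              rw [ae_iff, hone]
              exact measure_singleton a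
            filter_upwards [hsing] with x hxa hx
            have hxlt : x < a := lt_of_le_of_ne hx.2 hxa
            obtain ⟨b, hbA, hxb⟩ := exists_lt_of_lt_csSup hAne hxlt
            have hxmem : x ∈ Icc c 1 := ⟨hx.1.le, le_trans hx.2 ha1⟩
            have hgb : g x ≤ g b := hgmono hxmem hbA.1 hxb.le
            have hgx : g x < 0 := lt_of_le_of_lt hgb hbA.2
            simp only [hgdef] at hgx
            simp only [hPdef, indicator_of_mem hxmem]
            exact max_eq_right hgx.le
          calc ∫ x in Ioc c a, Ptr x
              = ∫ x in Ioc c a, (0:ℝ) := setIntegral_congr_ae measurableSet_Ioc hae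
            _ = 0 := by simp
        have hgeq : (∫ x in a..1, Ptr x) = ∫ x in a..1, g x := by
          rw [intervalIntegral.integral_of_le ha1, intervalIntegral.integral_of_le ha1]
          apply setIntegral_congr_fun measurableSet_Ioc
          intro x hx
          have hxmem : x ∈ Icc c 1 := ⟨le_trans hac hx.1.le, hx.2⟩
          have hge : 0 ≤ g x := by
            by_contra hneg
            push_neg at hneg
            have hmem : x ∈ A := ⟨hxmem, hneg⟩
            exact absurd (haA x hmem) (not_le.2 hx.1)
          simp only [hgdef] at hge
          simp only [hPdef, indicator_of_mem hxmem, hgdef]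
          exact max_eq_left hge
        have hdg : (∫ x in a..1, g x) ≤ u 1 - u a := by
          apply darboux_le ha1 (hgmono.mono (Icc_subset_Icc hac le_rfl))
          intro x hx x' hx'
          exact hF1 x ⟨le_trans hac hx.1, hx.2⟩ x' ⟨le_trans hac hx'.1, hx'.2⟩
        have hua := hu0 a hamem
        linarith
      · push_neg at hA
        have hcongP : (∫ x in c..1, Ptr x) = ∫ x in c..1, g x := by
          apply intervalIntegral.integral_congr
          intro s hs
          rw [uIcc_of_le hc1.le] at hs
          have := hA s hs
          simp only [hgdef] at this
          simp only [hPdef, indicator_of_mem hs, hgdef]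
          exact max_eq_left (by linarith)
        rw [hcongP]
        have hd := darboux_le hc1.le hgmono hF1
        linarith [hu0 c hcmem]
    -- final assembly
    have hfinal := hintineq
    rw [hsplit2] at hfinal
    have := hcong
    linarith [hm₁diff, hK3, hK3ge, hKle, hfinal]
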